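/- arXiv:1905.07499 — 2 statements merged into one kernel-verified Lean document; each statement's English description precedes it below -/
import Mathlib

section
/- Let σ_β > 0, τ > 0, and let λ₁ ≥ λ₂ ≥ ⋯ ≥ λ_D ≥ 0 be the singular values of the design matrix X. For M ≤ D, let λ̄ᵢ = λ_{M+i} for i = 1,…,D−M. Then the difference in differential entropies between the approximate posterior Σ̃_N = (σ_β⁻²I + τ U diag(λ₁²,…,λ_M²) Uᵀ)⁻¹ and the exact posterior Σ_N = (σ_β⁻²I + τ XᵀX)⁻¹ equals (1/2) Σ_{i=1}^{D−M} log(1 + τ σ_β² λ̄ᵢ²), and satisfies 0 ≤ H(p̃) − H(p) ≤ (τ σ_β²/2) Σ_{i=1}^{D−M} λ̄ᵢ². -/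
open Matrix

/-- Differential entropy of a `D`-dimensional Gaussian with covariance `S`:
`H = (1/2) log((2πe)^D det S)`. -/
noncomputable def gaussianEntropy {D : ℕ} (S : Matrix (Fin D) (Fin D) ℝ) : ℝ :=
  (1 / 2) * Real.log ((2 * Real.pi * Real.exp 1) ^ D * S.det)

lemma smul_conj_diag {D : ℕ} {n : Type*} [Fintype n] [DecidableEq n]
    (r : ℝ) (V : Matrix (Fin D) n ℝ) (d : n → ℝ) :
    r • (V * Matrix.diagonal d * Vᵀ) = V * Matrix.diagonal (fun i => r * d i) * Vᵀ := by
  have h : Matrix.diagonal (fun i => r * d i) = r • Matrix.diagonal d :=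
    Matrix.diagonal_smul r d
  rw [h, Matrix.mul_smul, Matrix.smul_mul]

lemma det_one_add_conj {D : ℕ} {n : Type*} [Fintype n] [DecidableEq n]
    (V : Matrix (Fin D) n ℝ) (hV : Vᵀ * V = 1) (d : n → ℝ) :
    (1 + V * Matrix.diagonal d * Vᵀ).det = ∏ i, (1 + d i) := by
  rw [Matrix.det_one_add_mul_comm, ← Matrix.mul_assoc, hV, Matrix.one_mul,
    ← Matrix.diagonal_one, Matrix.diagonal_add, Matrix.det_diagonal]

/-- The entropy gap between the low-rank approximate posterior and the exact
posterior equals `(1/2) Σᵢ log(1 + τ σβ² λ̄ᵢ²)` and lies between `0` and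
`(τ σβ²/2) Σᵢ λ̄ᵢ²`. -/
theorem entropy_information_loss {D N M K : ℕ}
    (σβ τ : ℝ) (hσ : 0 < σβ) (hτ : 0 < τ)
    (X : Matrix (Fin N) (Fin D) ℝ)
    (U : Matrix (Fin D) (Fin M) ℝ) (Ubar : Matrix (Fin D) (Fin K) ℝ)
    (lam : Fin M → ℝ) (lbar : Fin K → ℝ)
    (hlam : ∀ i, 0 ≤ lam i) (hlbar : ∀ i, 0 ≤ lbar i)
    (hU : Uᵀ * U = 1) (hUbar : Ubarᵀ * Ubar = 1) (hperp : Uᵀ * Ubar = 0)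
    (hcomplete : U * Uᵀ + Ubar * Ubarᵀ = 1)
    (hXtX : Xᵀ * X = U * diagonal (fun i => lam i ^ 2) * Uᵀ +
      Ubar * diagonal (fun i => lbar i ^ 2) * Ubarᵀ) :
    let SN := ((σβ ^ 2)⁻¹ • (1 : Matrix (Fin D) (Fin D) ℝ) + τ • (Xᵀ * X))⁻¹
    let SNt := ((σβ ^ 2)⁻¹ • (1 : Matrix (Fin D) (Fin D) ℝ) +
      τ • (U * diagonal (fun i => lam i ^ 2) * Uᵀ))⁻¹
    gaussianEntropy SNt - gaussianEntropy SN =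
        (1 / 2) * ∑ i, Real.log (1 + τ * σβ ^ 2 * lbar i ^ 2) ∧
      0 ≤ gaussianEntropy SNt - gaussianEntropy SN ∧
      gaussianEntropy SNt - gaussianEntropy SN ≤ (τ * σβ ^ 2 / 2) * ∑ i, lbar i ^ 2 := by
  intro SN SNt
  have hc : (0:ℝ) < σβ ^ 2 := pow_pos hσ 2
  have hτc : (0:ℝ) < τ * σβ ^ 2 := mul_pos hτ hc
  set c : ℝ := σβ ^ 2 with hcdef
  -- products
  set P : ℝ := ∏ i, (1 + τ * c * lam i ^ 2) with hPdef
  set Q : ℝ := ∏ i, (1 + τ * c * lbar i ^ 2) with hQdef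
  have hP : 0 < P := Finset.prod_pos fun i _ => by positivity
  have hQ : 0 < Q := Finset.prod_pos fun i _ => by positivity
  -- rewrite c⁻¹ • 1 + τ • M
  have key : ∀ (A : Matrix (Fin D) (Fin D) ℝ),
      c⁻¹ • (1 : Matrix (Fin D) (Fin D) ℝ) + τ • A
        = c⁻¹ • (1 + (τ * c) • A) := by
    intro A
    rw [smul_add, smul_smul]
    congr 2
    field_simp
  -- determinant of the approximate precision matrix
  have hdetAt : (c⁻¹ • (1 : Matrix (Fin D) (Fin D) ℝ) +
      τ • (U * diagonal (fun i => lam i ^ 2) * Uᵀ)).det = (c⁻¹) ^ D * P := by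
    rw [key, Matrix.det_smul, Fintype.card_fin, smul_conj_diag,
      det_one_add_conj U hU]
  -- determinant of the exact precision matrix
  have hcross : (1 + U * diagonal (fun i => τ * c * lam i ^ 2) * Uᵀ) *
      (1 + Ubar * diagonal (fun i => τ * c * lbar i ^ 2) * Ubarᵀ)
      = 1 + ((τ * c) • (Xᵀ * X)) := by
    have hz : (U * diagonal (fun i => τ * c * lam i ^ 2) * Uᵀ) *
        (Ubar * diagonal (fun i => τ * c * lbar i ^ 2) * Ubarᵀ) = 0 := by
      have h1 : Uᵀ * (Ubar * (diagonal (fun i => τ * c * lbar i ^ 2) * Ubarᵀ)) = 0 := by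
        rw [← Matrix.mul_assoc, hperp, Matrix.zero_mul]
      simp only [Matrix.mul_assoc, h1, Matrix.mul_zero]
    rw [hXtX, smul_add, smul_conj_diag, smul_conj_diag]
    simp only [mul_add, add_mul, one_mul, mul_one, hz, add_zero]
    abel
  have hdetA : (c⁻¹ • (1 : Matrix (Fin D) (Fin D) ℝ) + τ • (Xᵀ * X)).det
      = (c⁻¹) ^ D * (P * Q) := by
    rw [key, Matrix.det_smul, Fintype.card_fin, ← hcross, Matrix.det_mul,
      det_one_add_conj U hU, det_one_add_conj Ubar hUbar]
  -- determinants of the covariance matrices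
  have hcD : (c⁻¹ : ℝ) ^ D ≠ 0 := by positivity
  have hdetSNt : SNt.det = ((c⁻¹) ^ D * P)⁻¹ := by
    show (_⁻¹ : Matrix (Fin D) (Fin D) ℝ).det = _
    rw [Matrix.det_nonsing_inv, hdetAt, Ring.inverse_eq_inv]
  have hdetSN : SN.det = ((c⁻¹) ^ D * (P * Q))⁻¹ := by
    show (_⁻¹ : Matrix (Fin D) (Fin D) ℝ).det = _
    rw [Matrix.det_nonsing_inv, hdetA, Ring.inverse_eq_inv]
  -- entropy difference
  have hC : (0:ℝ) < (2 * Real.pi * Real.exp 1) ^ D := by positivity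
  have hgap : gaussianEntropy SNt - gaussianEntropy SN = (1/2) * Real.log Q := by
    unfold gaussianEntropy
    rw [hdetSNt, hdetSN]
    rw [Real.log_mul hC.ne' (by positivity), Real.log_mul hC.ne' (by positivity),
      Real.log_inv, Real.log_inv,
      Real.log_mul hcD (mul_ne_zero hP.ne' hQ.ne'), Real.log_mul hP.ne' hQ.ne',
      Real.log_mul hcD hP.ne']
    ring
  have hlogsum : Real.log Q = ∑ i, Real.log (1 + τ * c * lbar i ^ 2) := by
    rw [hQdef]
    exact Real.log_prod fun i _ => by positivity
  refine ⟨by rw [hgap, hlogsum], ?_, ?_⟩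
  · rw [hgap, hlogsum]
    have : 0 ≤ ∑ i, Real.log (1 + τ * c * lbar i ^ 2) :=
      Finset.sum_nonneg fun i _ => Real.log_nonneg (by nlinarith [sq_nonneg (lbar i)])
    linarith
  · rw [hgap, hlogsum]
    have hb : ∀ i ∈ Finset.univ, Real.log (1 + τ * c * lbar i ^ 2) ≤ τ * c * lbar i ^ 2 := by
      intro i _
      have := Real.log_le_sub_one_of_pos (x := 1 + τ * c * lbar i ^ 2) (by positivity)
      linarith
    have := Finset.sum_le_sum hb
    have h2 : ∑ i, τ * c * lbar i ^ 2 = (τ * c) * ∑ i, lbar i ^ 2 := by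
      rw [Finset.mul_sum]
    linarith
end

section
/- In conjugate Gaussian linear regression, the difference of the gradients of the exact and approximate log posteriors satisfies, for all β: ‖∇_β log p̃(β|X,Y) − ∇_β log p(β|X,Y)‖₂ = τ ‖Ū diag(λ̄⊙λ̄) Ūᵀ β − Ū diag(λ̄) V̄ᵀ Y‖₂ ≤ τ(λ̄₁² ‖Ūᵀ β‖₂ + λ̄₁ ‖V̄ᵀ Y‖₂). -/
open Matrix

lemma sum_sq_eq_dot' {n : ℕ} (x : Fin n → ℝ) : ∑ i, x i ^ 2 = x ⬝ᵥ x := by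
  simp [dotProduct, sq]

lemma isometry_sum_sq' {n k : ℕ} (A : Matrix (Fin n) (Fin k) ℝ) (h : Aᵀ * A = 1)
    (x : Fin k → ℝ) : ∑ i, (A *ᵥ x) i ^ 2 = ∑ i, x i ^ 2 := by
  rw [sum_sq_eq_dot', sum_sq_eq_dot', dotProduct_mulVec]
  have : (A *ᵥ x) ᵥ* A = x := by
    rw [← vecMul_transpose, vecMul_vecMul, h, vecMul_one]
  rw [this]

lemma sqrt_sum_sq_sub_le' {n : ℕ} (u w : Fin n → ℝ) :
    Real.sqrt (∑ i, (u i - w i) ^ 2) ≤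
      Real.sqrt (∑ i, u i ^ 2) + Real.sqrt (∑ i, w i ^ 2) := by
  have hnorm : ∀ x : Fin n → ℝ,
      Real.sqrt (∑ i, x i ^ 2) = ‖(WithLp.equiv 2 (Fin n → ℝ)).symm x‖ := by
    intro x
    rw [EuclideanSpace.norm_eq]
    simp [sq_abs]
  rw [hnorm, hnorm, hnorm]
  have := norm_sub_le ((WithLp.equiv 2 (Fin n → ℝ)).symm u) ((WithLp.equiv 2 (Fin n → ℝ)).symm w)
  exact this

lemma diag_bound' {n : ℕ} (d : Fin n → ℝ) (x : Fin n → ℝ) (c : ℝ) (hc : 0 ≤ c)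
    (h : ∀ i, d i ^ 2 ≤ c ^ 2) :
    Real.sqrt (∑ i, ((diagonal d *ᵥ x) i) ^ 2) ≤ c * Real.sqrt (∑ i, x i ^ 2) := by
  have h1 : ∑ i, ((diagonal d *ᵥ x) i) ^ 2 ≤ c ^ 2 * ∑ i, x i ^ 2 := by
    rw [Finset.mul_sum]
    apply Finset.sum_le_sum
    intro i _
    rw [mulVec_diagonal, mul_pow]
    exact mul_le_mul_of_nonneg_right (h i) (sq_nonneg _)
  calc Real.sqrt (∑ i, ((diagonal d *ᵥ x) i) ^ 2) ≤ Real.sqrt (c ^ 2 * ∑ i, x i ^ 2) :=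
        Real.sqrt_le_sqrt h1
    _ = c * Real.sqrt (∑ i, x i ^ 2) := by
        rw [Real.sqrt_mul (sq_nonneg c), Real.sqrt_sq hc]

lemma sqrt_sum_sq_smul' {n : ℕ} (c : ℝ) (hc : 0 ≤ c) (x : Fin n → ℝ) :
    Real.sqrt (∑ i, (c • x) i ^ 2) = c * Real.sqrt (∑ i, x i ^ 2) := by
  simp only [Pi.smul_apply, smul_eq_mul, mul_pow, ← Finset.mul_sum]
  rw [Real.sqrt_mul (sq_nonneg c), Real.sqrt_sq hc]

/-- In conjugate Gaussian linear regression, the difference of the gradients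
of the approximate and exact log posteriors (with common prior) equals
`τ (Ū diag(λ̄⊙λ̄) Ūᵀ β − Ū diag(λ̄) V̄ᵀ Y)` in norm, and is bounded by
`τ (λ̄₁² ‖Ūᵀ β‖ + λ̄₁ ‖V̄ᵀ Y‖)`. -/
theorem gradient_difference_bound {D N M K : ℕ}
    (τ : ℝ) (hτ : 0 < τ)
    (X : Matrix (Fin N) (Fin D) ℝ) (Y : Fin N → ℝ)
    (U : Matrix (Fin D) (Fin M) ℝ) (Ubar : Matrix (Fin D) (Fin K) ℝ)
    (V : Matrix (Fin N) (Fin M) ℝ) (Vbar : Matrix (Fin N) (Fin K) ℝ)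
    (lam : Fin M → ℝ) (lbar : Fin K → ℝ)
    (hlam : ∀ i, 0 ≤ lam i) (hlbar : ∀ i, 0 ≤ lbar i)
    (hU : Uᵀ * U = 1) (hUbar : Ubarᵀ * Ubar = 1) (hUperp : Uᵀ * Ubar = 0)
    (hV : Vᵀ * V = 1) (hVbar : Vbarᵀ * Vbar = 1) (hVperp : Vᵀ * Vbar = 0)
    (hX : Xᵀ = U * diagonal lam * Vᵀ + Ubar * diagonal lbar * Vbarᵀ)
    (i₁ : Fin K) (hmax : ∀ i, lbar i ≤ lbar i₁)
    (β : Fin D → ℝ) :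
    let gradDiff : Fin D → ℝ :=
      (-τ) • ((U * Uᵀ * (Xᵀ * X) * U * Uᵀ) *ᵥ β - (U * Uᵀ * Xᵀ) *ᵥ Y)
        + τ • ((Xᵀ * X) *ᵥ β - Xᵀ *ᵥ Y)
    Real.sqrt (∑ i, gradDiff i ^ 2) =
        τ * Real.sqrt (∑ i,
          (((Ubar * diagonal (fun j => lbar j * lbar j) * Ubarᵀ) *ᵥ β
            - (Ubar * diagonal lbar * Vbarᵀ) *ᵥ Y) i) ^ 2) ∧
      Real.sqrt (∑ i, gradDiff i ^ 2) ≤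
        τ * (lbar i₁ ^ 2 * Real.sqrt (∑ j, ((Ubarᵀ *ᵥ β) j) ^ 2)
          + lbar i₁ * Real.sqrt (∑ j, ((Vbarᵀ *ᵥ Y) j) ^ 2)) := by
  intro gradDiff
  -- transposed hypotheses
  have hX' : X = V * diagonal lam * Uᵀ + Vbar * diagonal lbar * Ubarᵀ := by
    have := congrArg transpose hX
    simpa [transpose_add, transpose_mul, diagonal_transpose, Matrix.mul_assoc] using this
  have hVperp' : Vbarᵀ * V = 0 := by
    have := congrArg transpose hVperp; simpa using this
  have hUperp' : Ubarᵀ * U = 0 := by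
    have := congrArg transpose hUperp; simpa using this
  -- Xᵀ X decomposition
  have hXX : Xᵀ * X = U * diagonal (fun j => lam j * lam j) * Uᵀ
      + Ubar * diagonal (fun j => lbar j * lbar j) * Ubarᵀ := by
    rw [hX, hX']
    simp only [Matrix.add_mul, Matrix.mul_add, Matrix.mul_assoc]
    rw [show Vᵀ * (V * (diagonal lam * Uᵀ)) = diagonal lam * Uᵀ by
      rw [← Matrix.mul_assoc, hV, Matrix.one_mul]]
    rw [show Vᵀ * (Vbar * (diagonal lbar * Ubarᵀ)) = 0 by
      rw [← Matrix.mul_assoc, hVperp, Matrix.zero_mul]]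
    rw [show Vbarᵀ * (V * (diagonal lam * Uᵀ)) = 0 by
      rw [← Matrix.mul_assoc, hVperp', Matrix.zero_mul]]
    rw [show Vbarᵀ * (Vbar * (diagonal lbar * Ubarᵀ)) = diagonal lbar * Ubarᵀ by
      rw [← Matrix.mul_assoc, hVbar, Matrix.one_mul]]
    rw [show diagonal lam * (diagonal lam * Uᵀ) = (diagonal fun j => lam j * lam j) * Uᵀ by
      rw [← Matrix.mul_assoc, diagonal_mul_diagonal]]
    rw [show diagonal lbar * (diagonal lbar * Ubarᵀ) = (diagonal fun j => lbar j * lbar j) * Ubarᵀ by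
      rw [← Matrix.mul_assoc, diagonal_mul_diagonal]]
    simp [Matrix.mul_assoc]
  -- projected matrices
  have h2 : U * Uᵀ * Xᵀ = U * diagonal lam * Vᵀ := by
    rw [hX]
    simp only [Matrix.mul_add, Matrix.mul_assoc]
    rw [show Uᵀ * (U * (diagonal lam * Vᵀ)) = diagonal lam * Vᵀ by
      rw [← Matrix.mul_assoc, hU, Matrix.one_mul]]
    rw [show Uᵀ * (Ubar * (diagonal lbar * Vbarᵀ)) = 0 by
      rw [← Matrix.mul_assoc, hUperp, Matrix.zero_mul]]
    simp [Matrix.mul_assoc]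
  have hUU : ∀ {p : ℕ} (w : Matrix (Fin M) (Fin p) ℝ), Uᵀ * (U * w) = w := by
    intro p w; rw [← Matrix.mul_assoc, hU, Matrix.one_mul]
  have hUO : ∀ {p : ℕ} (w : Matrix (Fin K) (Fin p) ℝ), Uᵀ * (Ubar * w) = 0 := by
    intro p w; rw [← Matrix.mul_assoc, hUperp, Matrix.zero_mul]
  have h3 : U * Uᵀ * (Xᵀ * X) * U * Uᵀ = U * diagonal (fun j => lam j * lam j) * Uᵀ := by
    rw [hXX]
    simp only [Matrix.mul_add, Matrix.add_mul, Matrix.mul_assoc, hUU, hUO,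
      Matrix.mul_zero, Matrix.zero_mul, add_zero, zero_add]
  -- matrix difference identities
  have hE : Xᵀ * X - U * Uᵀ * (Xᵀ * X) * U * Uᵀ
      = Ubar * diagonal (fun j => lbar j * lbar j) * Ubarᵀ := by
    rw [h3, hXX]; abel
  have hF : Xᵀ - U * Uᵀ * Xᵀ = Ubar * diagonal lbar * Vbarᵀ := by
    rw [h2, hX]; abel
  -- gradDiff closed form
  have key : gradDiff = τ • ((Ubar * diagonal (fun j => lbar j * lbar j) * Ubarᵀ) *ᵥ β
      - (Ubar * diagonal lbar * Vbarᵀ) *ᵥ Y) := by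
    show (-τ) • ((U * Uᵀ * (Xᵀ * X) * U * Uᵀ) *ᵥ β - (U * Uᵀ * Xᵀ) *ᵥ Y)
        + τ • ((Xᵀ * X) *ᵥ β - Xᵀ *ᵥ Y) = _
    rw [← hE, ← hF, Matrix.sub_mulVec, Matrix.sub_mulVec]
    module
  rw [key, sqrt_sum_sq_smul' τ hτ.le]
  refine ⟨rfl, ?_⟩
  -- bound the residual norm
  set b : Fin K → ℝ := Ubarᵀ *ᵥ β with hb
  set y : Fin K → ℝ := Vbarᵀ *ᵥ Y with hy
  have hw : (Ubar * diagonal (fun j => lbar j * lbar j) * Ubarᵀ) *ᵥ β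
      - (Ubar * diagonal lbar * Vbarᵀ) *ᵥ Y
      = Ubar *ᵥ ((diagonal (fun j => lbar j * lbar j)) *ᵥ b - (diagonal lbar) *ᵥ y) := by
    rw [Matrix.mulVec_sub]
    rw [← Matrix.mulVec_mulVec, ← Matrix.mulVec_mulVec, ← Matrix.mulVec_mulVec,
      ← Matrix.mulVec_mulVec]
  rw [hw, isometry_sum_sq' Ubar hUbar]
  have htri := sqrt_sum_sq_sub_le' ((diagonal (fun j => lbar j * lbar j)) *ᵥ b)
    ((diagonal lbar) *ᵥ y)
  have hd1 : Real.sqrt (∑ i, ((diagonal (fun j => lbar j * lbar j) *ᵥ b) i) ^ 2)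
      ≤ lbar i₁ ^ 2 * Real.sqrt (∑ i, b i ^ 2) := by
    apply diag_bound' _ _ _ (sq_nonneg _)
    intro i
    have h1 : lbar i * lbar i ≤ lbar i₁ ^ 2 := by
      rw [sq]; exact mul_le_mul (hmax i) (hmax i) (hlbar i) (hlbar i₁)
    exact pow_le_pow_left₀ (mul_nonneg (hlbar i) (hlbar i)) h1 2
  have hd2 : Real.sqrt (∑ i, ((diagonal lbar *ᵥ y) i) ^ 2)
      ≤ lbar i₁ * Real.sqrt (∑ i, y i ^ 2) := by
    apply diag_bound' _ _ _ (hlbar i₁)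
    intro i
    exact pow_le_pow_left₀ (hlbar i) (hmax i) 2
  have hchain : Real.sqrt (∑ i, ((diagonal (fun j => lbar j * lbar j) *ᵥ b) i
        - (diagonal lbar *ᵥ y) i) ^ 2)
      ≤ lbar i₁ ^ 2 * Real.sqrt (∑ i, b i ^ 2) + lbar i₁ * Real.sqrt (∑ i, y i ^ 2) :=
    htri.trans (add_le_add hd1 hd2)
  have : (∑ i, ((diagonal (fun j => lbar j * lbar j) *ᵥ b - diagonal lbar *ᵥ y) i) ^ 2)
      = ∑ i, ((diagonal (fun j => lbar j * lbar j) *ᵥ b) i - (diagonal lbar *ᵥ y) i) ^ 2 := by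
    simp [Pi.sub_apply]
  rw [this]
  exact mul_le_mul_of_nonneg_left hchain hτ.le
end
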